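/- Let g ≥ 1 and let m be a positive integer with m ≡ 2 (mod 4) and m ∉ {1, 2, 3, 4, 6, 10, 12, 18, 30}, such that every prime p dividing m satisfies p ≤ 2g+1. Write m = 2·p₂^{α₂}···p_k^{α_k}, where p₂ < ··· < p_k are the odd prime divisors of m, and set n = p₂^{α₂}···p_k^{α_k} = m/2. Then the sum S₂ = Σ_{i=2}^{k} φ(p_i^{α_i}) satisfies S₂ > n^{α/g}, where α = log 2 / log 3. -/

import Mathlib

lemma alpha_nonneg : 0 ≤ Real.log 2 / Real.log 3 :=
  div_nonneg (Real.log_nonneg (by norm_num)) (Real.log_nonneg (by norm_num))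

lemma alpha_le : Real.log 2 / Real.log 3 ≤ 3/4 := by
  have h := Real.log_le_log (by norm_num : (0:ℝ) < 16) (by norm_num : (16:ℝ) ≤ 27)
  rw [show (16:ℝ) = 2^4 by norm_num, show (27:ℝ) = 3^3 by norm_num,
    Real.log_pow, Real.log_pow] at h
  have h3 : 0 < Real.log 3 := Real.log_pos (by norm_num)
  rw [div_le_iff₀ h3]; push_cast at h; linarith

lemma three_rpow : (3:ℝ) ^ (Real.log 2 / Real.log 3) = 2 := by
  rw [show Real.log 2 / Real.log 3 = Real.logb 3 2 from rfl]
  exact Real.rpow_logb (by norm_num) (by norm_num) (by norm_num)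

lemma key_lt (p a : ℕ) (hp : p.Prime) (h2 : p ≠ 2) (ha : 1 ≤ a) (hne : p ^ a ≠ 3) :
    ((p ^ a : ℕ) : ℝ) ^ (Real.log 2 / Real.log 3) < ((p ^ a).totient : ℝ) := by
  have hp2 : 2 ≤ p := hp.two_le
  rcases eq_or_ne p 3 with rfl | h3
  · have ha2 : 2 ≤ a := by
      rcases Nat.lt_or_ge a 2 with h | h
      · have ha1 : a = 1 := by omega
        subst ha1
        simp at hne
      · exact h
    have htot : ((3:ℕ)^a).totient = 3^(a-1) * 2 := Nat.totient_prime_pow hp (by omega)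
    have hlhs : (((3:ℕ) ^ a : ℕ) : ℝ) ^ (Real.log 2 / Real.log 3) = 2 ^ a := by
      push_cast
      rw [← Real.rpow_natCast (3:ℝ) a, ← Real.rpow_mul (by norm_num), mul_comm,
        Real.rpow_mul (by norm_num), three_rpow, Real.rpow_natCast]
    rw [hlhs, htot]
    have : (2:ℕ)^a < 3^(a-1) * 2 := by
      have h1 : (2:ℕ)^(a-1) < 3^(a-1) := Nat.pow_lt_pow_left (by norm_num) (by omega)
      calc (2:ℕ)^a = 2^(a-1) * 2 := by
            rw [← pow_succ]; congr 1; omega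
        _ < 3^(a-1) * 2 := by omega
    exact_mod_cast this
  · have hp5 : 5 ≤ p := by
      rcases Nat.lt_or_ge p 5 with h | h
      · interval_cases p <;> simp_all (config := {decide := true})
      · exact h
    have hx1 : (1:ℝ) ≤ ((p^a : ℕ) : ℝ) := by
      have : 1 ≤ p ^ a := Nat.one_le_pow _ _ (by omega)
      exact_mod_cast this
    have step1 : ((p^a : ℕ) : ℝ) ^ (Real.log 2 / Real.log 3) ≤ ((p^a : ℕ) : ℝ) ^ ((3:ℝ)/4) :=
      Real.rpow_le_rpow_of_exponent_le hx1 alpha_le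
    have hnat : (p^a)^3 < ((p^a).totient)^4 := by
      obtain ⟨b, rfl⟩ : ∃ b, a = b + 1 := ⟨a - 1, by omega⟩
      rw [Nat.totient_prime_pow hp (by omega)]
      simp only [Nat.add_sub_cancel]
      have hq : p^3 < (p-1)^4 := by
        obtain ⟨q, rfl⟩ : ∃ q, p = q + 1 := ⟨p - 1, by omega⟩
        simp only [Nat.add_sub_cancel]
        have h4q : 4 ≤ q := by omega
        have e1 : 3*q^2 ≤ q^3 := by
          calc 3*q^2 ≤ q*q^2 := Nat.mul_le_mul_right _ (by omega)
            _ = q^3 := by ring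
        have e2 : 3*q ≤ q^3 := by
          calc 3*q ≤ q*q*q := by nlinarith
            _ = q^3 := by ring
        have e3 : 1 < q^3 := by
          calc 1 < 4 := by norm_num
            _ ≤ q := h4q
            _ ≤ q^3 := Nat.le_self_pow (by norm_num) q
        have e4 : 4*q^3 ≤ q^4 := by
          calc 4*q^3 ≤ q*q^3 := Nat.mul_le_mul_right _ h4q
            _ = q^4 := by ring
        calc (q+1)^3 = q^3 + 3*q^2 + 3*q + 1 := by ring
          _ < 4*q^3 := by omega
          _ ≤ q^4 := e4
      calc (p^(b+1))^3 = p^(3*b+3) := by ring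
        _ ≤ p^(4*b) * p^3 := by rw [← pow_add]; exact Nat.pow_le_pow_right (by omega) (by omega)
        _ < p^(4*b) * (p-1)^4 := by
            have hpb : 0 < p^(4*b) := Nat.pow_pos (by omega)
            exact (Nat.mul_lt_mul_left hpb).mpr hq
        _ = (p^b * (p-1))^4 := by ring
    have hy0 : (0:ℝ) ≤ ((p^a).totient : ℝ) := Nat.cast_nonneg _
    have step2 : ((p^a : ℕ) : ℝ) ^ ((3:ℝ)/4) < ((p^a).totient : ℝ) := by
      have h1 : ((p^a : ℕ) : ℝ) ^ ((3:ℝ)/4) = (((p^a : ℕ) : ℝ)^(3:ℕ)) ^ ((1:ℝ)/4) := by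
        rw [← Real.rpow_natCast ((p^a : ℕ) : ℝ) 3, ← Real.rpow_mul (by linarith)]
        norm_num
      have h2' : ((p^a).totient : ℝ) = (((p^a).totient : ℝ)^(4:ℕ)) ^ ((1:ℝ)/4) := by
        rw [← Real.rpow_natCast ((p^a).totient : ℝ) 4, ← Real.rpow_mul hy0]
        norm_num
      rw [h1, h2']
      apply Real.rpow_lt_rpow (by positivity) _ (by norm_num)
      exact_mod_cast hnat
    linarith

lemma key_le (p a : ℕ) (hp : p.Prime) (h2 : p ≠ 2) (ha : 1 ≤ a) :
    ((p ^ a : ℕ) : ℝ) ^ (Real.log 2 / Real.log 3) ≤ ((p ^ a).totient : ℝ) := by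
  rcases eq_or_ne (p ^ a) 3 with h | h
  · have hp3 : p = 3 ∧ a = 1 := by
      have ha1 : a = 1 := by
        by_contra hcon
        have h2a : 2 ≤ a := by omega
        have : 4 ≤ p ^ a :=
          le_trans (by norm_num : 4 ≤ 2^2)
            (le_trans (Nat.pow_le_pow_left hp.two_le 2) (Nat.pow_le_pow_right hp.one_lt.le h2a))
        rw [h] at this
        omega
      subst ha1
      simp at h
      exact ⟨h, rfl⟩
    obtain ⟨rfl, rfl⟩ := hp3
    rw [h, show Nat.totient 3 = 2 by decide]
    push_cast
    exact le_of_eq three_rpow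
  · exact (key_lt p a hp h2 ha h).le

theorem stmt_4 (g m : ℕ) (hg : 1 ≤ g) (hm : 0 < m) (hmod : m % 4 = 2)
    (hnot : m ∉ ({1, 2, 3, 4, 6, 10, 12, 18, 30} : Set ℕ))
    (hprimes : ∀ p : ℕ, p.Prime → p ∣ m → p ≤ 2 * g + 1) :
    ((m / 2 : ℕ) : ℝ) ^ ((Real.log 2 / Real.log 3) / (g : ℝ)) <
      ((∑ p ∈ m.primeFactors.erase 2, (p ^ m.factorization p).totient : ℕ) : ℝ) := by
  simp only [Set.mem_insert_iff, Set.mem_singleton_iff, not_or] at hnot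
  obtain ⟨-, hm2', -, -, hm6, -, -, -, -⟩ := hnot
  set n := m / 2 with hn
  have hm2 : m = 2 * n := by omega
  have hnodd : n % 2 = 1 := by omega
  have hn0 : n ≠ 0 := by omega
  have hn1 : n ≠ 1 := by omega
  have hn3 : n ≠ 3 := by omega
  have h2n : (2:ℕ) ∉ n.primeFactors := by
    intro h
    obtain ⟨c, hc⟩ := Nat.dvd_of_mem_primeFactors h
    omega
  -- rewrite the sum in terms of n
  have hS : m.primeFactors.erase 2 = n.primeFactors := by
    rw [hm2, Nat.primeFactors_mul two_ne_zero hn0, Nat.Prime.primeFactors Nat.prime_two]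
    ext q
    simp only [Finset.mem_erase, Finset.mem_union, Finset.mem_singleton]
    constructor
    · rintro ⟨hq2, hq | hq⟩
      · exact absurd hq hq2
      · exact hq
    · intro hq
      exact ⟨fun h => h2n (h ▸ hq), Or.inr hq⟩
  have hfac : ∀ q ∈ n.primeFactors, m.factorization q = n.factorization q := by
    intro q hq
    have hq2 : q ≠ 2 := fun h => h2n (h ▸ hq)
    rw [hm2, Nat.factorization_mul two_ne_zero hn0, Finsupp.add_apply,
      Nat.Prime.factorization Nat.prime_two, Finsupp.single_apply]
    simp [Ne.symm hq2]
  have hsum : (∑ p ∈ m.primeFactors.erase 2, (p ^ m.factorization p).totient)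
      = ∑ p ∈ n.primeFactors, (p ^ n.factorization p).totient := by
    rw [hS]
    exact Finset.sum_congr rfl (fun q hq => by rw [hfac q hq])
  rw [hsum]
  set P := n.primeFactors with hP
  set f : ℕ → ℕ := fun p => p ^ n.factorization p with hf
  have hprod : n = ∏ p ∈ P, f p := by
    have := Nat.factorization_prod_pow_eq_self hn0
    rw [Finsupp.prod, Nat.support_factorization] at this
    exact this.symm
  have hPne : P.Nonempty := Nat.nonempty_primeFactors.mpr (by omega)
  -- facts about elements of P
  have hmem : ∀ p ∈ P, p.Prime ∧ p ≠ 2 ∧ 1 ≤ n.factorization p ∧ p ≤ 2*g+1 := by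
    intro p hp
    have hpp := Nat.prime_of_mem_primeFactors hp
    have hdvd := Nat.dvd_of_mem_primeFactors hp
    have hp2 : p ≠ 2 := fun h => h2n (h ▸ hp)
    have hpm : p ∣ m := hdvd.trans ⟨2, by omega⟩
    exact ⟨hpp, hp2, hpp.factorization_pos_of_dvd hn0 hdvd, hprimes p hpp hpm⟩
  have hfpos : ∀ p ∈ P, 1 ≤ f p := by
    intro p hp
    exact Nat.one_le_pow _ _ (hmem p hp).1.pos
  have hkey : ∀ p ∈ P, f p ≠ 3 →
      ((f p : ℕ) : ℝ) ^ (Real.log 2 / Real.log 3) < ((f p).totient : ℝ) := by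
    intro p hp hne
    obtain ⟨h1, h2, h3, _⟩ := hmem p hp
    exact key_lt p _ h1 h2 h3 hne
  have hkeyle : ∀ p ∈ P, ((f p : ℕ) : ℝ) ^ (Real.log 2 / Real.log 3) ≤ ((f p).totient : ℝ) := by
    intro p hp
    obtain ⟨h1, h2, h3, _⟩ := hmem p hp
    exact key_le p _ h1 h2 h3
  have hg1 : (1:ℝ) ≤ (g:ℝ) := by exact_mod_cast hg
  have hgpos : (0:ℝ) < (g:ℝ) := by linarith
  have hα := alpha_nonneg
  push_cast
  rcases eq_or_lt_of_le (Finset.one_le_card.mpr hPne) with hcard1 | hcard2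
  · -- single prime: n = f p
    obtain ⟨p, hPp⟩ := Finset.card_eq_one.mp hcard1.symm
    have hpP : p ∈ P := by rw [hPp]; exact Finset.mem_singleton_self p
    have hnf : n = f p := by rw [hprod, hPp, Finset.prod_singleton]
    have hsum1 : (∑ q ∈ P, ((q ^ n.factorization q).totient : ℝ)) = ((f p).totient : ℝ) := by
      rw [hPp, Finset.sum_singleton]
    rw [hsum1]
    have hstep : ((n:ℕ):ℝ) ^ ((Real.log 2 / Real.log 3) / (g:ℝ))
        ≤ ((n:ℕ):ℝ) ^ (Real.log 2 / Real.log 3) := by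
      apply Real.rpow_le_rpow_of_exponent_le
      · have : 1 ≤ n := by omega
        exact_mod_cast this
      · exact div_le_self hα hg1
    calc ((n:ℕ):ℝ) ^ ((Real.log 2 / Real.log 3) / (g:ℝ))
        ≤ ((n:ℕ):ℝ) ^ (Real.log 2 / Real.log 3) := hstep
      _ < ((f p).totient : ℝ) := by
          rw [hnf] at hn3 ⊢
          exact hkey p hpP hn3
  · -- at least two primes
    obtain ⟨q, hqP, hqmax⟩ := P.exists_max_image f hPne
    obtain ⟨r, hrP, hrq⟩ := Finset.exists_mem_ne hcard2 q
    -- card P ≤ g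
    have hsub : P ⊆ (Finset.Icc 1 g).image (fun i => 2*i+1) := by
      intro p hp
      obtain ⟨hpp, hp2, _, hple⟩ := hmem p hp
      have hodd : p % 2 = 1 := by
        rcases hpp.eq_two_or_odd with h | h
        · exact absurd h hp2
        · exact h
      have hp3 : 3 ≤ p := by have := hpp.two_le; omega
      simp only [Finset.mem_image, Finset.mem_Icc]
      exact ⟨(p-1)/2, ⟨by omega, by omega⟩, by omega⟩
    have hcardg : P.card ≤ g := by
      calc P.card ≤ ((Finset.Icc 1 g).image (fun i => 2*i+1)).card := Finset.card_le_card hsub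
        _ ≤ (Finset.Icc 1 g).card := Finset.card_image_le
        _ = g := by simp
    have hnle : n ≤ (f q) ^ P.card := by
      rw [hprod]
      exact Finset.prod_le_pow_card P f (f q) hqmax
    have hfq1 : (1:ℝ) ≤ ((f q : ℕ) : ℝ) := by exact_mod_cast hfpos q hqP
    have hfq0 : (0:ℝ) ≤ ((f q : ℕ) : ℝ) := by linarith
    have hβ0 : 0 ≤ (Real.log 2 / Real.log 3) / (g:ℝ) := div_nonneg hα (le_of_lt hgpos)
    have h1 : ((n:ℕ):ℝ) ^ ((Real.log 2 / Real.log 3) / (g:ℝ))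
        ≤ (((f q)^P.card : ℕ):ℝ) ^ ((Real.log 2 / Real.log 3) / (g:ℝ)) :=
      Real.rpow_le_rpow (Nat.cast_nonneg _) (by exact_mod_cast hnle) hβ0
    have h2 : (((f q)^P.card : ℕ):ℝ) ^ ((Real.log 2 / Real.log 3) / (g:ℝ))
        = ((f q : ℕ):ℝ) ^ ((P.card : ℝ) * ((Real.log 2 / Real.log 3) / (g:ℝ))) := by
      rw [Nat.cast_pow, ← Real.rpow_natCast ((f q : ℕ):ℝ) P.card, ← Real.rpow_mul hfq0]
    have hexp : (P.card : ℝ) * ((Real.log 2 / Real.log 3) / (g:ℝ)) ≤ Real.log 2 / Real.log 3 := by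
      have hc : (P.card : ℝ) ≤ (g:ℝ) := by exact_mod_cast hcardg
      have h5 : (P.card:ℝ) * ((Real.log 2 / Real.log 3) / (g:ℝ))
          ≤ (g:ℝ) * ((Real.log 2 / Real.log 3) / (g:ℝ)) :=
        mul_le_mul_of_nonneg_right hc hβ0
      have h6 : (g:ℝ) * ((Real.log 2 / Real.log 3) / (g:ℝ)) = Real.log 2 / Real.log 3 := by
        field_simp
      linarith
    have h3 : ((f q : ℕ):ℝ) ^ ((P.card : ℝ) * ((Real.log 2 / Real.log 3) / (g:ℝ)))
        ≤ ((f q : ℕ):ℝ) ^ (Real.log 2 / Real.log 3) :=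
      Real.rpow_le_rpow_of_exponent_le hfq1 hexp
    have h4 : ((f q).totient : ℝ) < ∑ p ∈ P, ((p ^ n.factorization p).totient : ℝ) := by
      have : ∀ p ∈ P, ((p ^ n.factorization p).totient : ℝ) = ((f p).totient : ℝ) := fun p _ => rfl
      apply Finset.single_lt_sum hrq hqP hrP
      · have : 0 < (f r).totient := Nat.totient_pos.mpr (hfpos r hrP)
        exact_mod_cast this
      · intro k _ _
        exact Nat.cast_nonneg _
    calc ((n:ℕ):ℝ) ^ ((Real.log 2 / Real.log 3) / (g:ℝ))
        ≤ ((f q : ℕ):ℝ) ^ ((P.card : ℝ) * ((Real.log 2 / Real.log 3) / (g:ℝ))) := h1.trans_eq h2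
      _ ≤ ((f q : ℕ):ℝ) ^ (Real.log 2 / Real.log 3) := h3
      _ ≤ ((f q).totient : ℝ) := hkeyle q hqP
      _ < _ := h4
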